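/- Let θ be a real number with 1 < θ ≤ e, and let n be an integer with n > log θ / log 2 and n ≥ 2. Then (n − 1)/log θ < 1/(θ^{1/n} − 1) < n/log θ. -/

import Mathlib

open Real

lemma exp_quad_bound {x : ℝ} (h0 : 0 ≤ x) (h1 : x ≤ 1) : Real.exp x ≤ 1 + x + x ^ 2 := by
  have hb := Real.exp_bound (x := x) (by rw [abs_of_nonneg h0]; exact h1) (by norm_num : 0 < 2)
  rw [abs_of_nonneg h0] at hb
  simp [Finset.sum_range_succ] at hb
  have := abs_sub_le_iff.mp hb
  nlinarith [this.1, sq_nonneg x]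

theorem stmt_6 (θ : ℝ) (hθ : 1 < θ) (hθe : θ ≤ Real.exp 1) (n : ℕ) (hn : 2 ≤ n)
    (hlog : (n : ℝ) > Real.log θ / Real.log 2) :
    (n - 1 : ℝ) / Real.log θ < 1 / (θ ^ ((n : ℝ)⁻¹) - 1) ∧
    1 / (θ ^ ((n : ℝ)⁻¹) - 1) < (n : ℝ) / Real.log θ := by
  have hθ0 : (0:ℝ) < θ := lt_trans one_pos hθ
  have hL : 0 < Real.log θ := Real.log_pos hθ
  have hL1 : Real.log θ ≤ 1 := by
    calc Real.log θ ≤ Real.log (Real.exp 1) := Real.log_le_log hθ0 hθe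
    _ = 1 := Real.log_exp 1
  have hn2 : (2:ℝ) ≤ (n:ℝ) := by exact_mod_cast hn
  set L := Real.log θ with hLdef
  set x := L / n with hx
  have hx0 : 0 < x := div_pos hL (by linarith)
  have hxn : x * n = L := by rw [hx]; field_simp [show (n:ℝ) ≠ 0 by linarith]
  have hx1 : x ≤ 1/2 := by
    rw [hx, div_le_iff₀ (by linarith)]; nlinarith
  have hrpow : θ ^ ((n:ℝ)⁻¹) = Real.exp x := by
    rw [Real.rpow_def_of_pos hθ0, hx, div_eq_mul_inv]
  have hexp_gt : x + 1 < Real.exp x := Real.add_one_lt_exp (ne_of_gt hx0)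
  have hE : 0 < Real.exp x - 1 := by linarith
  rw [hrpow]
  constructor
  · rw [div_lt_div_iff₀ hL hE, one_mul]
    have hq := exp_quad_bound hx0.le (by linarith)
    nlinarith [hq, hE, hx0, hxn, mul_pos hx0 hx0]
  · rw [div_lt_div_iff₀ hE hL, one_mul]
    nlinarith [hexp_gt, hxn]
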